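/- Let B be a noetherian B_dR^+-algebra and I an ideal of B; let (f_1,…,f_m) and (f_1,…,f_m,g) be two finite generating sets of I. Then the natural B-algebra map (B[x_1,…,x_m]/(ξx_i − f_i, 1≤i≤m))/(ξ^∞-torsion) → (B[x_1,…,x_m,y]/(ξx_i − f_i, 1≤i≤m; ξy − g))/(ξ^∞-torsion), sending x_i to x_i, is an isomorphism; the same holds after ξ-adic completion. In particular, the prismatic envelope B[I/ξ]^∧_tf := ((B[x_1,…,x_m]/(ξx_i − f_i))^∧)/(ξ^∞-torsion) is independent of the choice of finite generators of I. -/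

import Mathlib

set_option maxHeartbeats 1000000
set_option synthInstance.maxHeartbeats 400000

/-!
# Statement 1

Let `B` be a noetherian `B_dR^+`-algebra and `I` an ideal of `B`; let `(f_1,…,f_m)` and
`(f_1,…,f_m,g)` be two finite generating sets of `I`.  Then the natural `B`-algebra map
`(B[x_1,…,x_m]/(ξx_i − f_i))/(ξ^∞-torsion) → (B[x_1,…,x_m,y]/(ξx_i − f_i; ξy − g))/(ξ^∞-torsion)`,
sending `x_i ↦ x_i`, is an isomorphism; the same holds after ξ-adic completion.  In
particular the prismatic envelope `B[I/ξ]^∧_tf` is independent of the choice of generators.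

Here `B_dR^+` is Fontaine's de Rham period ring of `K`, formalized as a commutative ring
`BdR` with a surjection `θ : BdR →+* K` onto a field whose kernel is generated by a
nonzerodivisor `ξ`, with `BdR` ξ-adically complete.  The `ξ^∞`-torsion of an algebra `A`
is the ideal of elements killed by a power of (the image of) `ξ`, and the ξ-adic completion
is `AdicCompletion (Ideal.span {ξ})`.  We model `B[x_1,…,x_m]` by
`MvPolynomial (Fin m) B` and `B[x_1,…,x_m,y]` by `MvPolynomial (Option (Fin m)) B`, the
variable `y` corresponding to `none`.
-/

/-- The ideal of `x`-power torsion elements of a commutative ring `A`. -/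
def xiTorsion (A : Type*) [CommRing A] (x : A) : Ideal A where
  carrier := {a | ∃ n : ℕ, x ^ n * a = 0}
  zero_mem' := ⟨0, by simp⟩
  add_mem' := by
    rintro a b ⟨n, hn⟩ ⟨k, hk⟩
    refine ⟨n + k, ?_⟩
    have h1 : x ^ (n + k) * a = x ^ k * (x ^ n * a) := by ring
    have h2 : x ^ (n + k) * b = x ^ n * (x ^ k * b) := by ring
    rw [mul_add, h1, h2, hn, hk, mul_zero, mul_zero, add_zero]
  smul_mem' := by
    rintro c a ⟨n, hn⟩
    refine ⟨n, ?_⟩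
    have h : x ^ n * (c • a) = c * (x ^ n * a) := by
      rw [smul_eq_mul]; ring
    rw [h, hn, mul_zero]

section Envelope

variable (B : Type) [CommRing B] (ξB : B) {σ : Type} (f : σ → B)

/-- `B[x_i : i ∈ σ]/(ξ x_i - f_i)`. -/
abbrev envRel : Type :=
  MvPolynomial σ B ⧸
    Ideal.span (Set.range fun i : σ =>
      MvPolynomial.C ξB * MvPolynomial.X i - MvPolynomial.C (f i))

/-- The image of `ξ` in `envRel`. -/
noncomputable abbrev envRelXi : envRel B ξB f :=
  Ideal.Quotient.mk _ (MvPolynomial.C ξB)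

/-- `(B[x_i]/(ξ x_i - f_i)) / (ξ^∞-torsion)`. -/
abbrev envTf : Type :=
  envRel B ξB f ⧸ xiTorsion (envRel B ξB f) (envRelXi B ξB f)

/-- The image of `ξ` in `envTf`. -/
noncomputable abbrev envTfXi : envTf B ξB f :=
  Ideal.Quotient.mk _ (envRelXi B ξB f)

/-- The class of the variable `x_i` in `envTf`. -/
noncomputable abbrev envTfX (i : σ) : envTf B ξB f :=
  Ideal.Quotient.mk _ (Ideal.Quotient.mk _ (MvPolynomial.X i))

/-- The ξ-adic completion of `envTf`: this is the prismatic envelope `B[I/ξ]^∧_tf`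
relative to the chosen generators of `I`.  -/
abbrev envCompl : Type :=
  AdicCompletion (Ideal.span {envTfXi B ξB f}) (envTf B ξB f)

end Envelope

/-- The extended family of generators `(f_1,…,f_m,g)`, indexed by `Option (Fin m)`
with `none ↦ g`. -/
def extGen {B : Type} [CommRing B] {m : ℕ} (f : Fin m → B) (g : B) :
    Option (Fin m) → B :=
  fun i => Option.elim i g f

section AdicFunctor

variable {R S : Type*} [CommRing R] [CommRing S]

/-- Level-`n` quotient map induced by a ring hom `e` with `map e I ≤ J`. -/
noncomputable def adicQMap (I : Ideal R) (J : Ideal S) (e : R →+* S)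
    (h : Ideal.map e I ≤ J) (n : ℕ) :
    R ⧸ (I ^ n • ⊤ : Ideal R) →+* S ⧸ (J ^ n • ⊤ : Ideal S) :=
  Ideal.quotientMap _ e (by
    rw [smul_eq_mul, Ideal.mul_top, smul_eq_mul, Ideal.mul_top]
    rw [← Ideal.map_le_iff_le_comap, Ideal.map_pow]
    exact Ideal.pow_right_mono h n)

theorem adicQMap_mk (I : Ideal R) (J : Ideal S) (e : R →+* S)
    (h : Ideal.map e I ≤ J) (n : ℕ) (r : R) :
    adicQMap I J e h n (Ideal.Quotient.mk _ r) = Ideal.Quotient.mk _ (e r) :=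
  Ideal.quotientMap_mk

theorem adicQMap_compat (I : Ideal R) (J : Ideal S) (e : R →+* S)
    (h : Ideal.map e I ≤ J) (x : AdicCompletion I R) {m n : ℕ} (hmn : m ≤ n) :
    AdicCompletion.transitionMap J S hmn (adicQMap I J e h n (x.val n))
      = adicQMap I J e h m (x.val m) := by
  obtain ⟨r, hr⟩ := Ideal.Quotient.mk_surjective (x.val n)
  have hx : x.val m = AdicCompletion.transitionMap I R hmn (x.val n) := (x.property hmn).symm
  rw [hx, ← hr]
  rw [adicQMap_mk, AdicCompletion.transitionMap_ideal_mk,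
    AdicCompletion.transitionMap_ideal_mk, adicQMap_mk]

theorem adicQMap_val_one (I : Ideal R) (J : Ideal S) (e : R →+* S)
    (h : Ideal.map e I ≤ J) (n : ℕ) :
    adicQMap I J e h n ((1 : AdicCompletion I R).val n) = (1 : AdicCompletion J S).val n := by
  rw [AdicCompletion.val_one, AdicCompletion.val_one, map_one]

theorem adicQMap_val_mul (I : Ideal R) (J : Ideal S) (e : R →+* S)
    (h : Ideal.map e I ≤ J) (n : ℕ) (x y : AdicCompletion I R) :
    adicQMap I J e h n ((x * y).val n)
      = adicQMap I J e h n (x.val n) * adicQMap I J e h n (y.val n) := by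
  rw [AdicCompletion.val_mul, map_mul]

/-- Underlying function of `adicMap`. -/
noncomputable def adicMapFun (I : Ideal R) (J : Ideal S) (e : R →+* S)
    (h : Ideal.map e I ≤ J) (x : AdicCompletion I R) : AdicCompletion J S :=
  ⟨fun n => adicQMap I J e h n (x.val n), fun hmn => adicQMap_compat I J e h x hmn⟩

theorem adicMapFun_val (I : Ideal R) (J : Ideal S) (e : R →+* S)
    (h : Ideal.map e I ≤ J) (x : AdicCompletion I R) (n : ℕ) :
    (adicMapFun I J e h x).val n = adicQMap I J e h n (x.val n) := rfl

/-- Functoriality of adic completion along a ring hom `e` with `map e I ≤ J`. -/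
noncomputable def adicMap (I : Ideal R) (J : Ideal S) (e : R →+* S)
    (h : Ideal.map e I ≤ J) :
    AdicCompletion I R →+* AdicCompletion J S where
  toFun := adicMapFun I J e h
  map_one' := Subtype.ext <| funext fun n => by
    rw [adicMapFun_val, AdicCompletion.val_one, AdicCompletion.val_one, map_one]
  map_mul' x y := Subtype.ext <| funext fun n => by
    rw [adicMapFun_val, AdicCompletion.val_mul, AdicCompletion.val_mul, map_mul,
      adicMapFun_val, adicMapFun_val]
  map_zero' := Subtype.ext <| funext fun n => by
    rw [adicMapFun_val, AdicCompletion.val_zero, AdicCompletion.val_zero]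
    simp only [Pi.zero_apply, map_zero]
  map_add' x y := Subtype.ext <| funext fun n => by
    simp only [adicMapFun_val, AdicCompletion.val_add, Pi.add_apply, map_add]

theorem adicMap_val (I : Ideal R) (J : Ideal S) (e : R →+* S)
    (h : Ideal.map e I ≤ J) (x : AdicCompletion I R) (n : ℕ) :
    (adicMap I J e h x).val n = adicQMap I J e h n (x.val n) := rfl

theorem adicMap_algebraMap (I : Ideal R) (J : Ideal S) (e : R →+* S)
    (h : Ideal.map e I ≤ J) (a : R) :
    adicMap I J e h (algebraMap R (AdicCompletion I R) a)
      = algebraMap S (AdicCompletion J S) (e a) := by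
  refine AdicCompletion.ext fun n => ?_
  have h1 : (algebraMap R (AdicCompletion I R) a).val n
      = Ideal.Quotient.mk (I ^ n • ⊤ : Ideal R) a := rfl
  have h2 : (algebraMap S (AdicCompletion J S) (e a)).val n
      = Ideal.Quotient.mk (J ^ n • ⊤ : Ideal S) (e a) := rfl
  rw [adicMap_val, h1, h2, adicQMap_mk]

theorem adicMap_adicMap (I : Ideal R) (J : Ideal S) (e : R →+* S) (e' : S →+* R)
    (h : Ideal.map e I ≤ J) (h' : Ideal.map e' J ≤ I)
    (hee' : ∀ r, e' (e r) = r) (x : AdicCompletion I R) :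
    adicMap J I e' h' (adicMap I J e h x) = x := by
  refine AdicCompletion.ext fun n => ?_
  obtain ⟨r, hr⟩ := Ideal.Quotient.mk_surjective (x.val n)
  rw [adicMap_val, adicMap_val, ← hr, adicQMap_mk, adicQMap_mk, hee']

end AdicFunctor

section EnvMaps

open MvPolynomial

variable {A : Type*} [CommRing A]

theorem key1 {m : ℕ} (ξA gA : A) (cA fA xA : Fin m → A)
    (hg : gA = ∑ j, cA j * fA j) :
    ξA * (∑ j, cA j * xA j) - gA = ∑ j, cA j * (ξA * xA j - fA j) := by
  have h1 : ∑ j, cA j * (ξA * xA j - fA j)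
      = ∑ j, cA j * (ξA * xA j) - ∑ j, cA j * fA j := by
    rw [← Finset.sum_sub_distrib]
    exact Finset.sum_congr rfl fun j _ => by ring
  have h2 : ξA * ∑ j, cA j * xA j = ∑ j, cA j * (ξA * xA j) := by
    rw [Finset.mul_sum]
    exact Finset.sum_congr rfl fun j _ => by ring
  rw [hg, h1, h2]

theorem key2 {m : ℕ} (ξA gA yA : A) (cA fA xA : Fin m → A)
    (hg : gA = ∑ j, cA j * fA j) :
    ξA * (yA - ∑ j, cA j * xA j)
      = (ξA * yA - gA) - ∑ j, cA j * (ξA * xA j - fA j) := by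
  rw [← key1 ξA gA cA fA xA hg]
  ring

/-- Descend an algebra hom along quotients by `ξ^∞`-torsion. -/
noncomputable def torsionLift {R A A' : Type*} [CommRing R] [CommRing A] [CommRing A']
    [Algebra R A] [Algebra R A'] (x : A) (x' : A') (F : A →ₐ[R] A') (hx : F x = x') :
    (A ⧸ xiTorsion A x) →ₐ[R] (A' ⧸ xiTorsion A' x') :=
  Ideal.Quotient.liftₐ _ ((Ideal.Quotient.mkₐ R _).comp F) (by
    intro a ha
    obtain ⟨n, hn⟩ := ha
    simp only [AlgHom.comp_apply, Ideal.Quotient.mkₐ_eq_mk]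
    rw [Ideal.Quotient.eq_zero_iff_mem]
    exact ⟨n, by rw [← hx, ← map_pow, ← map_mul, hn, map_zero]⟩)

theorem torsionLift_mk {R A A' : Type*} [CommRing R] [CommRing A] [CommRing A']
    [Algebra R A] [Algebra R A'] (x : A) (x' : A') (F : A →ₐ[R] A') (hx : F x = x')
    (a : A) :
    torsionLift x x' F hx (Ideal.Quotient.mk _ a) = Ideal.Quotient.mk _ (F a) := by
  simp [torsionLift, Ideal.Quotient.liftₐ_apply, Ideal.Quotient.lift_mk]
  rfl

variable {B : Type} [CommRing B] (ξB : B) {m : ℕ} (f : Fin m → B) (g : B) (c : Fin m → B)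

/-- `x_i ↦ x_i` on polynomial rings. -/
noncomputable def fwdPoly : MvPolynomial (Fin m) B →ₐ[B] MvPolynomial (Option (Fin m)) B :=
  aeval fun i => X (some i)

/-- `x_i ↦ x_i`, `y ↦ ∑ c_j x_j` on polynomial rings. -/
noncomputable def bwdPoly : MvPolynomial (Option (Fin m)) B →ₐ[B] MvPolynomial (Fin m) B :=
  aeval fun i => Option.elim i (∑ j, C (c j) * X j) X

theorem bwdPoly_comp_fwdPoly :
    (bwdPoly (B := B) (m := m) c).comp (fwdPoly (B := B) (m := m))
      = AlgHom.id B (MvPolynomial (Fin m) B) := by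
  refine MvPolynomial.algHom_ext fun i => ?_
  simp [fwdPoly, bwdPoly]

theorem hgC (hc : ∑ j, c j * f j = g) : MvPolynomial.C (σ := Fin m) g = ∑ j, C (c j) * C (f j) := by
  rw [← hc, map_sum]
  simp only [map_mul]

theorem hgC' (hc : ∑ j, c j * f j = g) : MvPolynomial.C (σ := Option (Fin m)) g = ∑ j, C (c j) * C (f j) := by
  rw [← hc, map_sum]
  simp only [map_mul]

/-- `x_i ↦ x_i` on the relation quotients. -/
noncomputable def fwdRel : envRel B ξB f →ₐ[B] envRel B ξB (extGen f g) :=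
  Ideal.Quotient.liftₐ _
    ((Ideal.Quotient.mkₐ B _).comp (fwdPoly (B := B) (m := m))) (by
      intro a ha
      rw [← RingHom.mem_ker]
      refine Ideal.span_le.mpr ?_ ha
      rintro _ ⟨i, rfl⟩
      have h1 : fwdPoly (B := B) (m := m) (C ξB * X i - C (f i))
          = C ξB * X (some i) - C (f i) := by
        simp [fwdPoly, aeval_C, MvPolynomial.algebraMap_eq]
      simp only [SetLike.mem_coe, RingHom.mem_ker, AlgHom.comp_apply,
        Ideal.Quotient.mkₐ_eq_mk, h1, Ideal.Quotient.eq_zero_iff_mem]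
      exact Ideal.subset_span ⟨some i, rfl⟩)

theorem fwdRel_mk (p : MvPolynomial (Fin m) B) :
    fwdRel ξB f g (Ideal.Quotient.mk _ p)
      = Ideal.Quotient.mk _ (fwdPoly (B := B) (m := m) p) := by
  simp [fwdRel, Ideal.Quotient.liftₐ_apply, Ideal.Quotient.lift_mk]
  rfl

/-- `x_i ↦ x_i`, `y ↦ ∑ c_j x_j` on the relation quotients. -/
noncomputable def bwdRel (hc : ∑ j, c j * f j = g) : envRel B ξB (extGen f g) →ₐ[B] envRel B ξB f :=
  Ideal.Quotient.liftₐ _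
    ((Ideal.Quotient.mkₐ B _).comp (bwdPoly (B := B) (m := m) c)) (by
      intro a ha
      rw [← RingHom.mem_ker]
      refine Ideal.span_le.mpr ?_ ha
      rintro _ ⟨i, rfl⟩
      cases i with
      | some j =>
          have h1 : bwdPoly (B := B) (m := m) c (C ξB * X (some j) - C (extGen f g (some j)))
              = C ξB * X j - C (f j) := by
            simp [bwdPoly, aeval_C, MvPolynomial.algebraMap_eq]
            rfl
          simp only [SetLike.mem_coe, RingHom.mem_ker, AlgHom.comp_apply,
            Ideal.Quotient.mkₐ_eq_mk, h1, Ideal.Quotient.eq_zero_iff_mem]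
          exact Ideal.subset_span ⟨j, rfl⟩
      | none =>
          have h1 : bwdPoly (B := B) (m := m) c (C ξB * X none - C (extGen f g none))
              = C ξB * (∑ j, C (c j) * X j) - C g := by
            simp [bwdPoly, aeval_C, MvPolynomial.algebraMap_eq]
            rfl
          have hkey := key1 (MvPolynomial.C (σ := Fin m) ξB) (C g)
            (fun j => C (c j)) (fun j => C (f j)) (fun j => X j) (hgC f g c hc)
          simp only [SetLike.mem_coe, RingHom.mem_ker, AlgHom.comp_apply,
            Ideal.Quotient.mkₐ_eq_mk, h1, Ideal.Quotient.eq_zero_iff_mem]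
          rw [hkey]
          exact Ideal.sum_mem _ fun j _ =>
            Ideal.mul_mem_left _ _ (Ideal.subset_span ⟨j, rfl⟩))

theorem bwdRel_mk (hc : ∑ j, c j * f j = g) (p : MvPolynomial (Option (Fin m)) B) :
    bwdRel ξB f g c hc (Ideal.Quotient.mk _ p)
      = Ideal.Quotient.mk _ (bwdPoly (B := B) (m := m) c p) := by
  simp [bwdRel, Ideal.Quotient.liftₐ_apply, Ideal.Quotient.lift_mk]
  rfl

theorem fwdRel_xi :
    fwdRel ξB f g (envRelXi B ξB f) = envRelXi B ξB (extGen f g) := by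
  rw [envRelXi, fwdRel_mk]
  simp [fwdPoly, aeval_C, MvPolynomial.algebraMap_eq]

theorem bwdRel_xi (hc : ∑ j, c j * f j = g) :
    bwdRel ξB f g c hc (envRelXi B ξB (extGen f g)) = envRelXi B ξB f := by
  rw [envRelXi, bwdRel_mk]
  simp [bwdPoly, aeval_C, MvPolynomial.algebraMap_eq]

/-- The natural map `envTf f → envTf (f, g)`. -/
noncomputable def fwdTf : envTf B ξB f →ₐ[B] envTf B ξB (extGen f g) :=
  torsionLift _ _ (fwdRel ξB f g) (fwdRel_xi ξB f g)

/-- The natural map `envTf (f, g) → envTf f`. -/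
noncomputable def bwdTf (hc : ∑ j, c j * f j = g) : envTf B ξB (extGen f g) →ₐ[B] envTf B ξB f :=
  torsionLift _ _ (bwdRel ξB f g c hc) (bwdRel_xi ξB f g c hc)

theorem fwdTf_mk (p : MvPolynomial (Fin m) B) :
    fwdTf ξB f g (Ideal.Quotient.mk _ (Ideal.Quotient.mk _ p))
      = Ideal.Quotient.mk _ (Ideal.Quotient.mk _ (fwdPoly (B := B) (m := m) p)) := by
  rw [fwdTf, torsionLift_mk, fwdRel_mk]

theorem bwdTf_mk (hc : ∑ j, c j * f j = g) (p : MvPolynomial (Option (Fin m)) B) :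
    bwdTf ξB f g c hc (Ideal.Quotient.mk _ (Ideal.Quotient.mk _ p))
      = Ideal.Quotient.mk _ (Ideal.Quotient.mk _ (bwdPoly (B := B) (m := m) c p)) := by
  rw [bwdTf, torsionLift_mk, bwdRel_mk]

theorem bwd_fwd (hc : ∑ j, c j * f j = g) (x : envTf B ξB f) : bwdTf ξB f g c hc (fwdTf ξB f g x) = x := by
  obtain ⟨q, rfl⟩ := Ideal.Quotient.mk_surjective x
  obtain ⟨p, rfl⟩ := Ideal.Quotient.mk_surjective q
  rw [fwdTf_mk, bwdTf_mk]
  have : bwdPoly (B := B) (m := m) c (fwdPoly (B := B) (m := m) p) = p := by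
    have := congrArg (fun F => F p) (bwdPoly_comp_fwdPoly (B := B) (m := m) c)
    simpa using this
  rw [this]

theorem fwd_bwd (hc : ∑ j, c j * f j = g) (x : envTf B ξB (extGen f g)) :
    fwdTf ξB f g (bwdTf ξB f g c hc x) = x := by
  obtain ⟨q, rfl⟩ := Ideal.Quotient.mk_surjective x
  obtain ⟨p, rfl⟩ := Ideal.Quotient.mk_surjective q
  rw [bwdTf_mk, fwdTf_mk]
  -- compare the two algebra homs `MvPolynomial (Option (Fin m)) B → envTf (extGen f g)`
  have hQ : ((Ideal.Quotient.mkₐ B (xiTorsion _ (envRelXi B ξB (extGen f g)))).comp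
        (Ideal.Quotient.mkₐ B _)).comp
        ((fwdPoly (B := B) (m := m)).comp (bwdPoly (B := B) (m := m) c))
      = (Ideal.Quotient.mkₐ B (xiTorsion _ (envRelXi B ξB (extGen f g)))).comp
        (Ideal.Quotient.mkₐ B _) := by
    refine MvPolynomial.algHom_ext fun i => ?_
    cases i with
    | some j => simp [fwdPoly, bwdPoly]
    | none =>
        simp only [AlgHom.comp_apply, Ideal.Quotient.mkₐ_eq_mk]
        have h1 : fwdPoly (B := B) (m := m) ((bwdPoly (B := B) (m := m) c) (X none))
            = ∑ j, C (c j) * X (some j) := by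
          simp [fwdPoly, bwdPoly, map_sum, aeval_C, MvPolynomial.algebraMap_eq]
        rw [h1, ← sub_eq_zero, ← map_sub, ← map_sub, Ideal.Quotient.eq_zero_iff_mem]
        refine ⟨1, ?_⟩
        rw [pow_one, envRelXi, ← map_mul, Ideal.Quotient.eq_zero_iff_mem]
        have hkey := key2 (MvPolynomial.C (σ := Option (Fin m)) ξB) (C g) (X none)
          (fun j => C (c j)) (fun j => C (f j)) (fun j => X (some j)) (hgC' f g c hc)
        rw [show (∑ j, C (c j) * X (some j) - X none : MvPolynomial (Option (Fin m)) B)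
          = -(X none - ∑ j, C (c j) * X (some j)) by ring, mul_neg]
        refine neg_mem ?_
        rw [hkey]
        refine Ideal.sub_mem _ (Ideal.subset_span ⟨none, rfl⟩) ?_
        exact Ideal.sum_mem _ fun j _ =>
          Ideal.mul_mem_left _ _ (Ideal.subset_span ⟨some j, rfl⟩)
  have := congrArg (fun F => F p) hQ
  simpa using this

end EnvMaps

theorem statement1
    -- B_dR^+ data: K a field, θ : BdR → K surjective, ker θ = (ξ), ξ a nonzerodivisor,
    -- BdR ξ-adically complete
    (K : Type) [Field K] (BdR : Type) [CommRing BdR]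
    (θ : BdR →+* K) (hθ : Function.Surjective θ) (ξ : BdR)
    (hker : RingHom.ker θ = Ideal.span {ξ}) (hξ : ξ ∈ nonZeroDivisors BdR)
    (hBdRcomplete : IsAdicComplete (Ideal.span {ξ}) BdR)
    -- B a noetherian BdR-algebra, I an ideal
    (B : Type) [CommRing B] [IsNoetherianRing B] [Algebra BdR B]
    (I : Ideal B)
    -- two finite generating sets (f_i) ⊆ (f_i, g) of I
    (m : ℕ) (f : Fin m → B) (g : B)
    (hf : Ideal.span (Set.range f) = I) (hg : g ∈ I) :
    -- the natural B-algebra map between the torsion-free quotients, x_i ↦ x_i,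
    -- is an isomorphism,
    ∃ φ : envTf B (algebraMap BdR B ξ) f →ₐ[B]
          envTf B (algebraMap BdR B ξ) (extGen f g),
      (∀ i : Fin m,
        φ (envTfX B (algebraMap BdR B ξ) f i) =
          envTfX B (algebraMap BdR B ξ) (extGen f g) (some i)) ∧
      Function.Bijective φ ∧
      -- and the same holds after ξ-adic completion (so the prismatic envelope
      -- B[I/ξ]^∧_tf does not depend on the chosen finite generators of I)
      ∃ φc : envCompl B (algebraMap BdR B ξ) f →+*
             envCompl B (algebraMap BdR B ξ) (extGen f g),
        (∀ a : envTf B (algebraMap BdR B ξ) f,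
          φc (algebraMap _ _ a) = algebraMap _ _ (φ a)) ∧
        Function.Bijective φc := by
  classical
  -- extract coefficients expressing g in terms of the f i
  have hg' : g ∈ Ideal.span (Set.range f) := by rw [hf]; exact hg
  rw [Ideal.span, Submodule.mem_span_range_iff_exists_fun] at hg'
  obtain ⟨c, hc0⟩ := hg'
  have hc : ∑ j, c j * f j = g := by simpa [smul_eq_mul] using hc0
  set ξB : B := algebraMap BdR B ξ with hξBdef
  refine ⟨fwdTf ξB f g, ?_, ?_, ?_⟩
  · intro i
    have h1 : fwdPoly (B := B) (m := m) (MvPolynomial.X i) = MvPolynomial.X (some i) := by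
      simp [fwdPoly]
    rw [envTfX, fwdTf_mk, h1]
  · exact Function.bijective_iff_has_inverse.mpr
      ⟨bwdTf ξB f g c hc, bwd_fwd ξB f g c hc, fwd_bwd ξB f g c hc⟩
  · have hCξ : fwdPoly (B := B) (m := m) (MvPolynomial.C ξB) = MvPolynomial.C ξB := by
      simp [fwdPoly, MvPolynomial.aeval_C, MvPolynomial.algebraMap_eq]
    have hCξ' : bwdPoly (B := B) (m := m) c (MvPolynomial.C ξB) = MvPolynomial.C ξB := by
      simp [bwdPoly, MvPolynomial.aeval_C, MvPolynomial.algebraMap_eq]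
    have hφξ : fwdTf ξB f g (envTfXi B ξB f) = envTfXi B ξB (extGen f g) := by
      show fwdTf ξB f g (Ideal.Quotient.mk _ (Ideal.Quotient.mk _ (MvPolynomial.C ξB)))
        = Ideal.Quotient.mk _ (Ideal.Quotient.mk _ (MvPolynomial.C ξB))
      rw [fwdTf_mk, hCξ]
    have hψξ : bwdTf ξB f g c hc (envTfXi B ξB (extGen f g)) = envTfXi B ξB f := by
      show bwdTf ξB f g c hc (Ideal.Quotient.mk _ (Ideal.Quotient.mk _ (MvPolynomial.C ξB)))
        = Ideal.Quotient.mk _ (Ideal.Quotient.mk _ (MvPolynomial.C ξB))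
      rw [bwdTf_mk, hCξ']
    have hIJ : Ideal.map ((fwdTf ξB f g).toRingHom) (Ideal.span {envTfXi B ξB f})
        ≤ Ideal.span {envTfXi B ξB (extGen f g)} := by
      rw [Ideal.map_span, Set.image_singleton]
      exact le_of_eq (by rw [show (fwdTf ξB f g).toRingHom (envTfXi B ξB f)
        = envTfXi B ξB (extGen f g) from hφξ])
    have hJI : Ideal.map ((bwdTf ξB f g c hc).toRingHom)
        (Ideal.span {envTfXi B ξB (extGen f g)}) ≤ Ideal.span {envTfXi B ξB f} := by
      rw [Ideal.map_span, Set.image_singleton]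
      exact le_of_eq (by rw [show (bwdTf ξB f g c hc).toRingHom (envTfXi B ξB (extGen f g))
        = envTfXi B ξB f from hψξ])
    refine ⟨adicMap _ _ (fwdTf ξB f g).toRingHom hIJ, ?_, ?_⟩
    · intro a
      exact adicMap_algebraMap _ _ _ hIJ a
    · refine Function.bijective_iff_has_inverse.mpr
        ⟨adicMap _ _ (bwdTf ξB f g c hc).toRingHom hJI, ?_, ?_⟩
      · intro x
        exact adicMap_adicMap _ _ _ _ hIJ hJI (bwd_fwd ξB f g c hc) x
      · intro x
        exact adicMap_adicMap _ _ _ _ hJI hIJ (fwd_bwd ξB f g c hc) x
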